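/- Let A ∈ ℝ^{n×n}, B ∈ ℝ^{n×m}, let Q ∈ ℝ^{n×n} be symmetric, let ε > 0 satisfy xᵀ(AᵀQA − Q)x ≤ −ε‖x‖² for all x ∈ ℝⁿ, and let w be a zero-mean square-integrable random vector in ℝ^m with covariance matrix Σ_w = E[w wᵀ]. Then for every x ∈ ℝⁿ with ‖x‖² > tr(BᵀQBΣ_w)/ε, one has E[(Ax+Bw)ᵀQ(Ax+Bw)] ≤ xᵀQx. -/

import Mathlib

open Matrix MeasureTheory

lemma int_mul_aux {Ω : Type*} [MeasurableSpace Ω] {μ : Measure Ω} {f g : Ω → ℝ}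
    (hf : MemLp f 2 μ) (hg : MemLp g 2 μ) : Integrable (fun ω => f ω * g ω) μ := by
  have h := L2.integrable_inner (𝕜 := ℝ) (hf.toLp f) (hg.toLp g)
  refine h.congr ?_
  filter_upwards [hf.coeFn_toLp, hg.coeFn_toLp] with ω h1 h2
  simp [h1, h2, RCLike.inner_apply, mul_comm]

lemma expand_quad_aux {n m : ℕ} (A : Matrix (Fin n) (Fin n) ℝ) (B : Matrix (Fin n) (Fin m) ℝ)
    (Q : Matrix (Fin n) (Fin n) ℝ) (hQ : Q.IsSymm) (x : Fin n → ℝ) (z : Fin m → ℝ) :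
    (A.mulVec x + B.mulVec z) ⬝ᵥ Q.mulVec (A.mulVec x + B.mulVec z)
      = x ⬝ᵥ (Aᵀ * Q * A).mulVec x + 2 * ((Bᵀ * Q * A).mulVec x ⬝ᵥ z)
        + z ⬝ᵥ (Bᵀ * Q * B).mulVec z := by
  have key : ∀ {p q : ℕ} (P : Matrix (Fin n) (Fin p) ℝ) (R : Matrix (Fin n) (Fin q) ℝ)
      (a : Fin p → ℝ) (b : Fin q → ℝ),
      P.mulVec a ⬝ᵥ Q.mulVec (R.mulVec b) = a ⬝ᵥ (Pᵀ * Q * R).mulVec b := by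
    intro p q P R a b
    rw [← mulVec_mulVec, ← mulVec_mulVec, dotProduct_mulVec a, vecMul_transpose]
  have hsym : x ⬝ᵥ (Aᵀ * Q * B).mulVec z = (Bᵀ * Q * A).mulVec x ⬝ᵥ z := by
    rw [dotProduct_mulVec, ← mulVec_transpose, transpose_mul, transpose_mul,
      transpose_transpose, hQ.eq, Matrix.mul_assoc]
  simp only [mulVec_add, dotProduct_add, add_dotProduct, key]
  rw [hsym, dotProduct_comm z ((Bᵀ * Q * A).mulVec x)]; ring

/-- Drift criterion V1 for the linear stochastic system `x⁺ = Ax + Bw` with quadratic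
drift `V(x) = xᵀQx`: if `xᵀ(AᵀQA - Q)x ≤ -ε‖x‖²` for all `x`, then
`E[V(Ax+Bw)] ≤ V(x)` whenever `‖x‖² > tr(BᵀQBΣw)/ε`. -/
theorem quadratic_drift_outside_compact {n m : ℕ} {Ω : Type*} [MeasurableSpace Ω]
    (μ : Measure Ω) [IsProbabilityMeasure μ]
    (A : Matrix (Fin n) (Fin n) ℝ) (B : Matrix (Fin n) (Fin m) ℝ)
    (Q : Matrix (Fin n) (Fin n) ℝ) (hQ : Q.IsSymm)
    (ε : ℝ) (hε : 0 < ε)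
    (hdecr : ∀ x : Fin n → ℝ, x ⬝ᵥ (Aᵀ * Q * A - Q).mulVec x ≤ -ε * (x ⬝ᵥ x))
    (w : Ω → Fin m → ℝ) (hmeas : Measurable w)
    (hL2 : ∀ i, MemLp (fun ω => w ω i) 2 μ)
    (hmean : ∀ i, ∫ ω, w ω i ∂μ = 0)
    (Sw : Matrix (Fin m) (Fin m) ℝ)
    (hcov : ∀ i j, ∫ ω, w ω i * w ω j ∂μ = Sw i j) :
    ∀ x : Fin n → ℝ, (Bᵀ * Q * B * Sw).trace / ε < x ⬝ᵥ x →
      ∫ ω, (A.mulVec x + B.mulVec (w ω)) ⬝ᵥ Q.mulVec (A.mulVec x + B.mulVec (w ω)) ∂μ ≤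
        x ⬝ᵥ Q.mulVec x := by
  intro x hx
  have hw_int : ∀ j, Integrable (fun ω => w ω j) μ := fun j => (hL2 j).integrable (by norm_num)
  set K : ℝ := x ⬝ᵥ (Aᵀ * Q * A).mulVec x with hK
  set c : Fin m → ℝ := (Bᵀ * Q * A).mulVec x with hc
  set M : Matrix (Fin m) (Fin m) ℝ := Bᵀ * Q * B with hM
  have hlin_int : Integrable (fun ω => c ⬝ᵥ w ω) μ := by
    simp only [dotProduct]
    exact integrable_finset_sum _ (fun j _ => (hw_int j).const_mul (c j))
  have hquad_eq : ∀ z : Fin m → ℝ, z ⬝ᵥ M.mulVec z = ∑ i, ∑ j, M i j * (z i * z j) := by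
    intro z
    simp only [dotProduct, mulVec]
    refine Finset.sum_congr rfl fun i _ => ?_
    rw [Finset.mul_sum]
    exact Finset.sum_congr rfl fun j _ => by ring
  have hquad_int : Integrable (fun ω => ∑ i, ∑ j, M i j * (w ω i * w ω j)) μ :=
    integrable_finset_sum _ fun i _ => integrable_finset_sum _ fun j _ =>
      (int_mul_aux (hL2 i) (hL2 j)).const_mul _
  have hlin_val : ∫ ω, c ⬝ᵥ w ω ∂μ = 0 := by
    simp only [dotProduct]
    rw [integral_finset_sum _ (fun j _ => (hw_int j).const_mul (c j))]
    simp [integral_const_mul, hmean]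
  have hquad_val : ∫ ω, (∑ i, ∑ j, M i j * (w ω i * w ω j)) ∂μ = ∑ i, ∑ j, M i j * Sw i j := by
    rw [integral_finset_sum _ (fun i _ => integrable_finset_sum _ fun j _ =>
      (int_mul_aux (hL2 i) (hL2 j)).const_mul (M i j))]
    refine Finset.sum_congr rfl fun i _ => ?_
    rw [integral_finset_sum _ (fun j _ => (int_mul_aux (hL2 i) (hL2 j)).const_mul (M i j))]
    refine Finset.sum_congr rfl fun j _ => ?_
    rw [integral_const_mul, hcov]
  have htr : ∑ i, ∑ j, M i j * Sw i j = (M * Sw).trace := by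
    have hSw : ∀ i j, Sw j i = Sw i j := fun i j => by
      rw [← hcov, ← hcov]; simp [mul_comm]
    simp only [Matrix.trace, Matrix.diag, Matrix.mul_apply]
    exact Finset.sum_congr rfl fun i _ => Finset.sum_congr rfl fun j _ => by rw [hSw i j]
  have hint : ∫ ω, (A.mulVec x + B.mulVec (w ω)) ⬝ᵥ Q.mulVec (A.mulVec x + B.mulVec (w ω)) ∂μ
      = K + (M * Sw).trace := by
    have heq : (fun ω => (A.mulVec x + B.mulVec (w ω)) ⬝ᵥ Q.mulVec (A.mulVec x + B.mulVec (w ω)))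
        = fun ω => K + 2 * (c ⬝ᵥ w ω) + ∑ i, ∑ j, M i j * (w ω i * w ω j) := by
      funext ω
      rw [expand_quad_aux A B Q hQ x (w ω), hquad_eq]
    have i1 : Integrable (fun ω => K + 2 * (c ⬝ᵥ w ω)) μ :=
      (integrable_const K).add (hlin_int.const_mul 2)
    have i2 : Integrable (fun ω => (2 : ℝ) * (c ⬝ᵥ w ω)) μ := hlin_int.const_mul 2
    rw [heq, integral_add i1 hquad_int, integral_add (integrable_const K) i2, integral_const,
      integral_const_mul, hlin_val, hquad_val, htr]
    simp
  rw [hint]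
  have h1 := hdecr x
  rw [sub_mulVec, dotProduct_sub] at h1
  have h2 : (M * Sw).trace < ε * (x ⬝ᵥ x) := by
    have := (div_lt_iff₀ hε).mp hx
    rw [hM]; linarith
  linarith
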